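/- Let A, B be n₁ × n₁ and C, D be n₂ × n₂ complex matrices, let α ∈ ℂ, and let d₁, d₂ ≥ 1. Suppose u₀ = 0 and u₁, …, u_{d₁} ∈ ℂ^{n₁} satisfy (A − αB) u_i = B u_{i−1} for i = 1, …, d₁, and v₀ = 0 and v₁, …, v_{d₂} ∈ ℂ^{n₂} satisfy (C − αD) v_i = D v_{i−1} for i = 1, …, d₂. Then for every j with 1 ≤ j ≤ min(d₁, d₂), the vector z_j = ∑_{i=1}^{j} u_i ⊗ v_{j+1−i} ∈ ℂ^{n₁ n₂} satisfies (A ⊗ D − B ⊗ C) z_j = 0. -/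

import Mathlib

open Matrix Kronecker Finset

/-- Kronecker product of vectors. -/
def vkron {n₁ n₂ : ℕ} (x : Fin n₁ → ℂ) (y : Fin n₂ → ℂ) : Fin n₁ × Fin n₂ → ℂ :=
  fun p => x p.1 * y p.2

lemma vkron_add_left {n₁ n₂ : ℕ} (x x' : Fin n₁ → ℂ) (y : Fin n₂ → ℂ) :
    vkron (x + x') y = vkron x y + vkron x' y := by
  funext p; simp [vkron]; ring

lemma vkron_add_right {n₁ n₂ : ℕ} (x : Fin n₁ → ℂ) (y y' : Fin n₂ → ℂ) :
    vkron x (y + y') = vkron x y + vkron x y' := by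
  funext p; simp [vkron]; ring

lemma vkron_smul_left {n₁ n₂ : ℕ} (a : ℂ) (x : Fin n₁ → ℂ) (y : Fin n₂ → ℂ) :
    vkron (a • x) y = a • vkron x y := by
  funext p; simp [vkron]; ring

lemma vkron_smul_right {n₁ n₂ : ℕ} (a : ℂ) (x : Fin n₁ → ℂ) (y : Fin n₂ → ℂ) :
    vkron x (a • y) = a • vkron x y := by
  funext p; simp [vkron]; ring

lemma vkron_zero_left {n₁ n₂ : ℕ} (y : Fin n₂ → ℂ) : vkron (0 : Fin n₁ → ℂ) y = 0 := by
  funext p; simp [vkron]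

lemma vkron_zero_right {n₁ n₂ : ℕ} (x : Fin n₁ → ℂ) : vkron x (0 : Fin n₂ → ℂ) = 0 := by
  funext p; simp [vkron]

lemma kron_mulVec {n₁ n₂ : ℕ} (M : Matrix (Fin n₁) (Fin n₁) ℂ)
    (N : Matrix (Fin n₂) (Fin n₂) ℂ) (x : Fin n₁ → ℂ) (y : Fin n₂ → ℂ) :
    (M ⊗ₖ N).mulVec (vkron x y) = vkron (M.mulVec x) (N.mulVec y) := by
  funext p
  simp only [Matrix.mulVec, dotProduct, vkron, kroneckerMap_apply, Fintype.sum_prod_type,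
    Finset.mul_sum, Finset.sum_mul]
  rw [Finset.sum_comm]
  congr 1; funext q
  congr 1; funext r
  ring

theorem jordan_pair_kernel_vectors {n₁ n₂ d₁ d₂ : ℕ} (hd₁ : 1 ≤ d₁) (hd₂ : 1 ≤ d₂)
    (A B : Matrix (Fin n₁) (Fin n₁) ℂ) (C D : Matrix (Fin n₂) (Fin n₂) ℂ) (α : ℂ)
    (u : ℕ → Fin n₁ → ℂ) (v : ℕ → Fin n₂ → ℂ)
    (hu0 : u 0 = 0)
    (hu : ∀ i : ℕ, 1 ≤ i → i ≤ d₁ → (A - α • B).mulVec (u i) = B.mulVec (u (i - 1)))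
    (hv0 : v 0 = 0)
    (hv : ∀ i : ℕ, 1 ≤ i → i ≤ d₂ → (C - α • D).mulVec (v i) = D.mulVec (v (i - 1))) :
    ∀ j : ℕ, 1 ≤ j → j ≤ min d₁ d₂ →
      (A ⊗ₖ D - B ⊗ₖ C).mulVec (∑ i ∈ Finset.Icc 1 j, vkron (u i) (v (j + 1 - i))) = 0 := by
  intro j hj1 hj2
  have hjd₁ : j ≤ d₁ := hj2.trans (min_le_left _ _)
  have hjd₂ : j ≤ d₂ := hj2.trans (min_le_right _ _)
  set g : ℕ → Fin n₁ × Fin n₂ → ℂ :=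
    fun a => vkron (B.mulVec (u a)) (D.mulVec (v (j - a))) with hg
  have key : ∀ i ∈ Finset.Icc 1 j,
      (A ⊗ₖ D - B ⊗ₖ C).mulVec (vkron (u i) (v (j + 1 - i))) = g (i - 1) - g i := by
    intro i hi
    simp only [Finset.mem_Icc] at hi
    obtain ⟨hi1, hi2⟩ := hi
    set k := j + 1 - i with hk
    have hk1 : 1 ≤ k := by omega
    have hkd : k ≤ d₂ := by omega
    have hA : A.mulVec (u i) = B.mulVec (u (i - 1)) + α • B.mulVec (u i) := by
      have h := hu i hi1 (hi2.trans hjd₁)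
      rw [Matrix.sub_mulVec, Matrix.smul_mulVec] at h
      rw [← h]; abel
    have hC : C.mulVec (v k) = D.mulVec (v (k - 1)) + α • D.mulVec (v k) := by
      have h := hv k hk1 hkd
      rw [Matrix.sub_mulVec, Matrix.smul_mulVec] at h
      rw [← h]; abel
    have e1 : k - 1 = j - i := by omega
    have e2 : j - (i - 1) = k := by omega
    rw [Matrix.sub_mulVec, kron_mulVec, kron_mulVec, hA, hC, e1, hg]
    simp only [e2, vkron_add_left, vkron_add_right, vkron_smul_left, vkron_smul_right]
    abel
  have hsum : (A ⊗ₖ D - B ⊗ₖ C).mulVec (∑ i ∈ Finset.Icc 1 j, vkron (u i) (v (j + 1 - i)))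
      = ∑ i ∈ Finset.Icc 1 j, (A ⊗ₖ D - B ⊗ₖ C).mulVec (vkron (u i) (v (j + 1 - i))) := by
    exact map_sum (Matrix.mulVecLin _) _ _
  rw [hsum, Finset.sum_congr rfl key]
  have hIcc : Finset.Icc 1 j = Finset.map ⟨fun k => k + 1, fun a b h => Nat.succ_injective h⟩
      (Finset.range j) := by
    ext x
    simp only [Finset.mem_Icc, Finset.mem_map, Finset.mem_range, Function.Embedding.coeFn_mk]
    constructor
    · rintro ⟨h1, h2⟩; exact ⟨x - 1, by omega, by show x - 1 + 1 = x; omega⟩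
    · rintro ⟨a, ha, rfl⟩; show 1 ≤ a + 1 ∧ a + 1 ≤ j; omega
  rw [hIcc, Finset.sum_map]
  show ∑ x ∈ Finset.range j, (g (x + 1 - 1) - g (x + 1)) = 0
  simp only [Nat.add_sub_cancel]
  rw [Finset.sum_range_sub' g j, hg]
  simp [hu0, hv0, vkron_zero_left, vkron_zero_right]
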